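/- arXiv:1708.00860 — 4 statements merged into one kernel-verified Lean document; each statement's English description precedes it below -/
import Mathlib

section
/- Every locally ball B_{e,α}[x,r] = {y ∈ X : ν_{x−y,e}(r) ≥ α} in a Menger 2-PN space (X, ν) is a convex set. -/
open Filter Finset

/-- A Menger 2-probabilistic norm: `ν x y` is a distance distribution function
satisfying axioms (A1)–(A5). -/
structure IsMenger2PN (X : Type*) [AddCommGroup X] [Module ℝ X]
    (ν : X → X → ℝ → ℝ) : Prop where
  nonneg : ∀ x y t, 0 ≤ ν x y t
  le_one : ∀ x y t, ν x y t ≤ 1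
  mono : ∀ x y, Monotone (ν x y)
  zero : ∀ x y t, t ≤ 0 → ν x y t = 0
  one_iff : ∀ x y : X, (∀ t, 0 < t → ν x y t = 1) ↔ ¬ LinearIndependent ℝ ![x, y]
  symm : ∀ x y t, ν x y t = ν y x t
  smul : ∀ (α : ℝ), α ≠ 0 → ∀ x y t, ν (α • x) y t = ν x y (t / |α|)
  add : ∀ x y z s t, min (ν x z s) (ν y z t) ≤ ν (x + y) z (s + t)

variable {X : Type*} [AddCommGroup X] [Module ℝ X]

/-- Convergence of a sequence in a Menger 2-PN space. -/
def TendsTo2PN (ν : X → X → ℝ → ℝ) (s : ℕ → X) (x : X) : Prop :=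
  ∀ z : X, ∀ t : ℝ, 0 < t → Tendsto (fun n => ν (s n - x) z t) atTop (nhds 1)

/-- The locally ball `B_{e,α}[x,r]`. -/
def locallyBall (ν : X → X → ℝ → ℝ) (e : X) (α : ℝ) (x : X) (r : ℝ) : Set X :=
  {y : X | α ≤ ν (x - y) e r}

theorem locallyBall_convex (ν : X → X → ℝ → ℝ) (hν : IsMenger2PN X ν)
    (e x : X) (α r : ℝ) (hα : 0 < α) (hα1 : α < 1) (hr : 0 < r) :
    ∀ a ∈ locallyBall ν e α x r, ∀ b ∈ locallyBall ν e α x r,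
      ∀ lam : ℝ, 0 < lam → lam < 1 →
        lam • a + (1 - lam) • b ∈ locallyBall ν e α x r := by
  intro a ha b hb lam hl hl1
  have hlam : lam ≠ 0 := ne_of_gt hl
  have hlam1 : (1 - lam) ≠ 0 := by linarith
  have key : x - (lam • a + (1 - lam) • b) = lam • (x - a) + (1 - lam) • (x - b) := by
    module
  simp only [locallyBall, Set.mem_setOf_eq] at *
  rw [key]
  have h1 : ν (lam • (x - a)) e (lam * r) = ν (x - a) e r := by
    rw [hν.smul lam hlam, abs_of_pos hl, mul_div_cancel_left₀ r hlam]
  have h2 : ν ((1 - lam) • (x - b)) e ((1 - lam) * r) = ν (x - b) e r := by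
    rw [hν.smul _ hlam1, abs_of_pos (by linarith), mul_div_cancel_left₀ r hlam1]
  have := hν.add (lam • (x - a)) ((1 - lam) • (x - b)) e (lam * r) ((1 - lam) * r)
  rw [h1, h2, show lam * r + (1 - lam) * r = r by ring] at this
  exact le_trans (le_min ha hb) this
end

section
/- In a Menger 2-PN space (X, ν), every closed convex subset of X is convex series closed. -/
open Filter Finset

variable {X : Type*} [AddCommGroup X] [Module ℝ X]

/-- `(l, x)` is a convex series of elements of `F`. -/
def IsConvexSeries (F : Set X) (l : ℕ → ℝ) (x : ℕ → X) : Prop :=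
  (∀ n, x n ∈ F) ∧ (∀ n, 0 ≤ l n) ∧ HasSum l 1

/-- The series `Σ l n • x n` converges to `s` in the 2-PN sense. -/
def SeriesConv2PN (ν : X → X → ℝ → ℝ) (l : ℕ → ℝ) (x : ℕ → X) (s : X) : Prop :=
  TendsTo2PN ν (fun N => ∑ i ∈ Finset.range N, l i • x i) s

/-- `F` contains the sum of every convergent convex series of its elements. -/
def ConvexSeriesClosed (ν : X → X → ℝ → ℝ) (F : Set X) : Prop :=
  ∀ (l : ℕ → ℝ) (x : ℕ → X) (s : X),
    IsConvexSeries F l x → SeriesConv2PN ν l x s → s ∈ F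

/-- Every convex series of elements of `F` converges to a point of `F`. -/
def ConvexSeriesCompact (ν : X → X → ℝ → ℝ) (F : Set X) : Prop :=
  ∀ (l : ℕ → ℝ) (x : ℕ → X), IsConvexSeries F l x → ∃ s ∈ F, SeriesConv2PN ν l x s

/-- The (sequential) closure of a set in a Menger 2-PN space. -/
def clPts (ν : X → X → ℝ → ℝ) (E : Set X) : Set X :=
  {x : X | ∃ s : ℕ → X, (∀ n, s n ∈ E) ∧ TendsTo2PN ν s x}

theorem closed_convex_convexSeriesClosed (ν : X → X → ℝ → ℝ) (hν : IsMenger2PN X ν)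
    (F : Set X)
    (hconv : ∀ a ∈ F, ∀ b ∈ F, ∀ lam : ℝ, 0 < lam → lam < 1 → lam • a + (1 - lam) • b ∈ F)
    (hclosed : clPts ν F = F) :
    ConvexSeriesClosed ν F := by
  rintro l x s ⟨hxF, hl0, hsum⟩ hconv2
  set S : ℕ → X := fun N => ∑ i ∈ Finset.range N, l i • x i with hS
  set L : ℕ → ℝ := fun N => ∑ i ∈ Finset.range N, l i with hL
  have hLto : Tendsto L atTop (nhds 1) := hsum.tendsto_sum_nat
  have hL1 : ∀ N, L N ≤ 1 := fun N => sum_le_hasSum _ (fun i _ => hl0 i) hsum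
  have hFconv : Convex ℝ F := by
    rw [convex_iff_forall_pos]
    intro a ha b hb p q hp hq hpq
    have hb1 : q = 1 - p := by linarith
    have hp1 : p < 1 := by linarith
    rw [hb1]
    exact hconv a ha b hb p hp hp1
  suffices hs : s ∈ clPts ν F by rwa [hclosed] at hs
  by_cases hA : ∃ N, L N = 1
  · obtain ⟨N, hN⟩ := hA
    have hSN : S N ∈ F := hFconv.sum_mem (fun i _ => hl0 i) hN (fun i _ => hxF i)
    have hlz : ∀ j, N ≤ j → l j = 0 := by
      intro j hj
      have h1 : L N ≤ L j :=
        Finset.sum_le_sum_of_subset_of_nonneg (Finset.range_subset_range.mpr hj)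
          (fun i _ _ => hl0 i)
      have h2 : L (j + 1) ≤ 1 := hL1 _
      have h3 : L (j + 1) = L j + l j := Finset.sum_range_succ _ _
      have h4 := hl0 j
      rw [hN] at h1
      linarith
    have hconst : ∀ M, N ≤ M → S M = S N := by
      intro M hM
      have h5 : ∑ i ∈ Finset.Ico N M, l i • x i = S M - S N :=
        Finset.sum_Ico_eq_sub _ hM
      have h6 : ∑ i ∈ Finset.Ico N M, l i • x i = 0 := by
        apply Finset.sum_eq_zero
        intro i hi
        rw [hlz i (Finset.mem_Ico.mp hi).1, zero_smul]
      have := h5.symm.trans h6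
      rw [sub_eq_zero] at this
      exact this
    have h1 : ∀ z t, 0 < t → ν (S N - s) z t = 1 := by
      intro z t ht
      have h2 := hconv2 z t ht
      have h3 : Tendsto (fun _ : ℕ => ν (S N - s) z t) atTop (nhds 1) := by
        refine Filter.Tendsto.congr' ?_ h2
        filter_upwards [eventually_ge_atTop N] with M hM
        show ν (S M - s) z t = ν (S N - s) z t
        rw [hconst M hM]
      exact tendsto_nhds_unique tendsto_const_nhds h3
    refine ⟨fun _ => S N, fun _ => hSN, ?_⟩
    intro z t ht
    simp only [h1 z t ht]
    exact tendsto_const_nhds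
  · push_neg at hA
    have hAlt : ∀ N, L N < 1 := fun N => lt_of_le_of_ne (hL1 N) (hA N)
    have hK : ∀ N : ℕ, ∃ K, N < K ∧ (1 + L N) / 2 ≤ L K := by
      intro N
      have h1 : (1 + L N) / 2 < 1 := by linarith [hAlt N]
      obtain ⟨K, h⟩ := ((hLto.eventually (eventually_ge_nhds h1)).and
        (eventually_gt_atTop N)).exists
      exact ⟨K, h.2, h.1⟩
    choose K hKgt hKge using hK
    set c : ℕ → ℝ := fun N => (1 - L N) / (L (K N) - L N) with hc
    have hden : ∀ N, 0 < L (K N) - L N := by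
      intro N; have := hKge N; have := hAlt N; linarith
    have hc1 : ∀ N, 1 < c N := by
      intro N
      rw [hc, lt_div_iff₀ (hden N)]
      have := hAlt (K N); linarith
    have hc2 : ∀ N, c N ≤ 2 := by
      intro N
      rw [hc, div_le_iff₀ (hden N)]
      have := hKge N; linarith
    set w : ℕ → X := fun N => S N + c N • (S (K N) - S N) with hw
    have hwF : ∀ N, w N ∈ F := by
      intro N
      have hNK : N ≤ K N := (hKgt N).le
      have hkey : w N = ∑ i ∈ Finset.range (K N),
          (if i < N then l i else c N * l i) • x i := by
        rw [Finset.range_eq_Ico, ← Finset.sum_Ico_consecutive _ (Nat.zero_le N) hNK]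
        have e1 : ∑ i ∈ Finset.Ico 0 N, (if i < N then l i else c N * l i) • x i
            = S N := by
          rw [← Finset.range_eq_Ico, hS]
          exact Finset.sum_congr rfl fun i hi => by
            rw [if_pos (Finset.mem_range.mp hi)]
        have e2 : ∑ i ∈ Finset.Ico N (K N), (if i < N then l i else c N * l i) • x i
            = c N • (S (K N) - S N) := by
          have e3 : ∑ i ∈ Finset.Ico N (K N), l i • x i = S (K N) - S N :=
            Finset.sum_Ico_eq_sub _ hNK
          rw [← e3, Finset.smul_sum]
          refine Finset.sum_congr rfl fun i hi => ?_
          rw [if_neg (by simpa using (Finset.mem_Ico.mp hi).1), mul_smul]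
        rw [e1, e2]
      have hsum1 : ∑ i ∈ Finset.range (K N), (if i < N then l i else c N * l i) = 1 := by
        rw [Finset.range_eq_Ico, ← Finset.sum_Ico_consecutive _ (Nat.zero_le N) hNK]
        have e1 : ∑ i ∈ Finset.Ico 0 N, (if i < N then l i else c N * l i) = L N := by
          rw [← Finset.range_eq_Ico, hL]
          exact Finset.sum_congr rfl fun i hi => by
            rw [if_pos (Finset.mem_range.mp hi)]
        have e2 : ∑ i ∈ Finset.Ico N (K N), (if i < N then l i else c N * l i)
            = c N * (L (K N) - L N) := by
          have e3 : ∑ i ∈ Finset.Ico N (K N), l i = L (K N) - L N :=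
            Finset.sum_Ico_eq_sub _ hNK
          rw [← e3, Finset.mul_sum]
          refine Finset.sum_congr rfl fun i hi => ?_
          rw [if_neg (by simpa using (Finset.mem_Ico.mp hi).1)]
        rw [e1, e2, hc, div_mul_cancel₀ _ (ne_of_gt (hden N))]
        ring
      rw [hkey]
      refine hFconv.sum_mem (fun i _ => ?_) hsum1 (fun i _ => hxF i)
      split
      · exact hl0 i
      · exact mul_nonneg (by linarith [hc1 N]) (hl0 i)
    refine ⟨w, hwF, ?_⟩
    intro z t ht
    have ha : Tendsto (fun N => ν (S N - s) z (t / 2)) atTop (nhds 1) :=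
      hconv2 z (t / 2) (by positivity)
    have hb : Tendsto (fun N => ν (S (K N) - s) z (t / 4)) atTop (nhds 1) := by
      have hKto : Tendsto K atTop atTop :=
        tendsto_atTop_mono (fun N => (hKgt N).le) tendsto_id
      exact (hconv2 z (t / 4) (by positivity)).comp hKto
    have key : ∀ N, min (ν (S N - s) z (t / 2)) (ν (S (K N) - s) z (t / 4))
        ≤ ν (w N - s) z t := by
      intro N
      have hcpos : (0 : ℝ) < c N := lt_trans one_pos (hc1 N)
      have hne1 : (1 : ℝ) - c N ≠ 0 := by linarith [hc1 N]
      have hdec : w N - s = (1 - c N) • (S N - s) + c N • (S (K N) - s) := by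
        rw [hw]
        simp only [smul_sub, sub_smul, one_smul]
        abel
      have step1 : ν (S N - s) z (t / 2) ≤ ν ((1 - c N) • (S N - s)) z (t / 2) := by
        rw [hν.smul (1 - c N) hne1]
        apply hν.mono
        rw [abs_of_neg (by linarith [hc1 N] : (1 : ℝ) - c N < 0)]
        rw [le_div_iff₀ (by linarith [hc1 N] : (0 : ℝ) < -(1 - c N))]
        nlinarith [hc1 N, hc2 N, ht]
      have step2 : ν (S (K N) - s) z (t / 4) ≤ ν (c N • (S (K N) - s)) z (t / 2) := by
        rw [hν.smul (c N) (ne_of_gt hcpos)]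
        apply hν.mono
        rw [abs_of_pos hcpos, le_div_iff₀ hcpos]
        nlinarith [hc2 N, ht]
      calc min (ν (S N - s) z (t / 2)) (ν (S (K N) - s) z (t / 4))
          ≤ min (ν ((1 - c N) • (S N - s)) z (t / 2))
              (ν (c N • (S (K N) - s)) z (t / 2)) := min_le_min step1 step2
        _ ≤ ν ((1 - c N) • (S N - s) + c N • (S (K N) - s)) z (t / 2 + t / 2) :=
            hν.add _ _ _ _ _
        _ = ν (w N - s) z t := by rw [← hdec]; norm_num
    have hmin : Tendsto (fun N => min (ν (S N - s) z (t / 2))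
        (ν (S (K N) - s) z (t / 4))) atTop (nhds 1) := by
      have := ha.min hb
      simpa using this
    exact tendsto_of_tendsto_of_tendsto_of_le_of_le hmin tendsto_const_nhds key
      (fun N => hν.le_one _ _ _)
end

section
/- Let (X×Y, ν) be a Menger generalized 2-PN space and A×B, C×B two nonempty D-bounded subsets of X×Y. If D⁺ is closed under the t-norm M (minimum), then (A+C)×B is D-bounded. -/
open Filter Pointwise

/-- A Menger generalized 2-probabilistic norm on `X × Y`. -/
structure IsMG2PN (X Y : Type*) [AddCommGroup X] [Module ℝ X]
    [AddCommGroup Y] [Module ℝ Y] (ν : X → Y → ℝ → ℝ) : Prop where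
  nonneg : ∀ x y t, 0 ≤ ν x y t
  le_one : ∀ x y t, ν x y t ≤ 1
  mono : ∀ x y, Monotone (ν x y)
  zero : ∀ x y t, t ≤ 0 → ν x y t = 0
  smul_left : ∀ (α : ℝ), α ≠ 0 → ∀ x y t, ν (α • x) y t = ν x y (t / |α|)
  smul_right : ∀ (α : ℝ), α ≠ 0 → ∀ x y t, ν x (α • y) t = ν x y (t / |α|)
  add_left : ∀ x x' y t, min (ν x y t) (ν x' y t) ≤ ν (x + x') y t
  add_right : ∀ x y y' t, min (ν x y t) (ν x y' t) ≤ ν x (y + y') t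

variable {X Y : Type*} [AddCommGroup X] [Module ℝ X] [AddCommGroup Y] [Module ℝ Y]

/-- The probabilistic radius of `A × B`. -/
noncomputable def radius2 (ν : X → Y → ℝ → ℝ) (A : Set X) (B : Set Y) : ℝ → ℝ :=
  Function.leftLim (fun t => sInf {v : ℝ | ∃ a ∈ A, ∃ b ∈ B, v = ν a b t})

/-- `A × B` is `𝒟`-bounded. -/
def DBounded2 (ν : X → Y → ℝ → ℝ) (A : Set X) (B : Set Y) : Prop :=
  Tendsto (radius2 ν A B) atTop (nhds 1)

/-- `F` is a proper distance distribution function (`F ∈ 𝒟⁺`). -/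
def IsDF (F : ℝ → ℝ) : Prop :=
  Monotone F ∧ (∀ t ≤ (0 : ℝ), F t = 0) ∧ Tendsto F atTop (nhds 1)


private lemma infSet_bddBelow (ν : X → Y → ℝ → ℝ) (hν : IsMG2PN X Y ν)
    (A : Set X) (B : Set Y) (t : ℝ) :
    BddBelow {v : ℝ | ∃ a ∈ A, ∃ b ∈ B, v = ν a b t} := by
  refine ⟨0, ?_⟩
  rintro v ⟨a, ha, b, hb, rfl⟩
  exact hν.nonneg a b t

private lemma infFun_mono (ν : X → Y → ℝ → ℝ) (hν : IsMG2PN X Y ν)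
    (A : Set X) (B : Set Y) (hA : A.Nonempty) (hB : B.Nonempty) :
    Monotone (fun t => sInf {v : ℝ | ∃ a ∈ A, ∃ b ∈ B, v = ν a b t}) := by
  intro s t hst
  obtain ⟨a0, ha0⟩ := hA; obtain ⟨b0, hb0⟩ := hB
  refine le_csInf ⟨ν a0 b0 t, a0, ha0, b0, hb0, rfl⟩ ?_
  rintro v ⟨a, ha, b, hb, rfl⟩
  exact le_trans (csInf_le (infSet_bddBelow ν hν A B s) ⟨a, ha, b, hb, rfl⟩)
    (hν.mono a b hst)

theorem dBounded_add_left (ν : X → Y → ℝ → ℝ) (hν : IsMG2PN X Y ν)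
    (A C : Set X) (B : Set Y) (hA : A.Nonempty) (hC : C.Nonempty) (hB : B.Nonempty)
    (hAB : DBounded2 ν A B) (hCB : DBounded2 ν C B)
    (hM : ∀ F G : ℝ → ℝ, IsDF F → IsDF G → IsDF (fun t => min (F t) (G t))) :
    DBounded2 ν (A + C) B := by
  obtain ⟨a0, ha0⟩ := hA
  obtain ⟨c0, hc0⟩ := hC
  obtain ⟨b0, hb0⟩ := hB
  have hAne : A.Nonempty := ⟨a0, ha0⟩
  have hCne : C.Nonempty := ⟨c0, hc0⟩
  have hBne : B.Nonempty := ⟨b0, hb0⟩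
  have hACne : (A + C).Nonempty := hAne.add hCne
  set f := fun t => sInf {v : ℝ | ∃ a ∈ A, ∃ b ∈ B, v = ν a b t} with hf
  set g := fun t => sInf {v : ℝ | ∃ a ∈ C, ∃ b ∈ B, v = ν a b t} with hg
  set h := fun t => sInf {v : ℝ | ∃ a ∈ A + C, ∃ b ∈ B, v = ν a b t} with hh
  have hfm : Monotone f := infFun_mono ν hν A B hAne hBne
  have hgm : Monotone g := infFun_mono ν hν C B hCne hBne
  have hhm : Monotone h := infFun_mono ν hν (A + C) B hACne hBne
  -- pointwise bound: min (f s) (g s) ≤ h s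
  have key : ∀ s, min (f s) (g s) ≤ h s := by
    intro s
    refine le_csInf ⟨ν (a0 + c0) b0 s, a0 + c0, Set.add_mem_add ha0 hc0, b0, hb0, rfl⟩ ?_
    rintro v ⟨x, hx, b, hb, rfl⟩
    obtain ⟨a, ha, c, hc, rfl⟩ := hx
    have h1 : f s ≤ ν a b s := csInf_le (infSet_bddBelow ν hν A B s) ⟨a, ha, b, hb, rfl⟩
    have h2 : g s ≤ ν c b s := csInf_le (infSet_bddBelow ν hν C B s) ⟨c, hc, b, hb, rfl⟩
    exact le_trans (min_le_min h1 h2) (hν.add_left a c b s)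
  -- lower bound on radius
  have lower : ∀ t, min (radius2 ν A B t) (radius2 ν C B t) ≤ radius2 ν (A + C) B t := by
    intro t
    have tf : Tendsto f (nhdsWithin t (Set.Iio t)) (nhds (Function.leftLim f t)) :=
      hfm.tendsto_leftLim t
    have tg : Tendsto g (nhdsWithin t (Set.Iio t)) (nhds (Function.leftLim g t)) :=
      hgm.tendsto_leftLim t
    have th : Tendsto h (nhdsWithin t (Set.Iio t)) (nhds (Function.leftLim h t)) :=
      hhm.tendsto_leftLim t
    exact le_of_tendsto_of_tendsto' (tf.min tg) th key
  -- upper bound on radius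
  have upper : ∀ t, radius2 ν (A + C) B t ≤ 1 := by
    intro t
    have h1 : Function.leftLim h t ≤ h t := hhm.leftLim_le le_rfl
    have h2 : h t ≤ ν (a0 + c0) b0 t :=
      csInf_le (infSet_bddBelow ν hν (A + C) B t)
        ⟨a0 + c0, Set.add_mem_add ha0 hc0, b0, hb0, rfl⟩
    exact le_trans h1 (le_trans h2 (hν.le_one _ _ _))
  have hmin : Tendsto (fun t => min (radius2 ν A B t) (radius2 ν C B t)) atTop (nhds 1) := by
    have := hAB.min hCB
    simpa using this
  exact tendsto_of_tendsto_of_tendsto_of_le_of_le hmin tendsto_const_nhds lower upper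
end

section
/- Let (X×Y, ν) be a Menger generalized 2-PN space and suppose A×(B+D) and C×(B+D) are D-bounded. If D⁺ is closed under the t-norm M (minimum), then the Minkowski sum A×B + C×D := {(p+r, q+s) : (p,q) ∈ A×B, (r,s) ∈ C×D} is D-bounded, with R_{A×B + C×D} ≥ M{R_{A×(B+D)}, R_{C×(B+D)}}. -/
open Filter Pointwise

variable {X Y : Type*} [AddCommGroup X] [Module ℝ X] [AddCommGroup Y] [Module ℝ Y]

/-- The probabilistic radius of a subset of `X × Y`. -/
noncomputable def radiusS (ν : X → Y → ℝ → ℝ) (S : Set (X × Y)) : ℝ → ℝ :=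
  Function.leftLim (fun t => sInf {v : ℝ | ∃ p ∈ S, v = ν p.1 p.2 t})

noncomputable def innS (ν : X → Y → ℝ → ℝ) (S : Set (X × Y)) (t : ℝ) : ℝ :=
  sInf {v : ℝ | ∃ p ∈ S, v = ν p.1 p.2 t}

lemma radiusS_eq (ν : X → Y → ℝ → ℝ) (S : Set (X × Y)) :
    radiusS ν S = Function.leftLim (innS ν S) := rfl

lemma radius2_eq (ν : X → Y → ℝ → ℝ) (A : Set X) (B : Set Y) :
    radius2 ν A B = radiusS ν (A ×ˢ B) := by
  have hset : ∀ t : ℝ, {v : ℝ | ∃ a ∈ A, ∃ b ∈ B, v = ν a b t} =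
      {v : ℝ | ∃ p ∈ A ×ˢ B, v = ν p.1 p.2 t} := by
    intro t; ext v; constructor
    · rintro ⟨a, ha, b, hb, rfl⟩; exact ⟨(a, b), ⟨ha, hb⟩, rfl⟩
    · rintro ⟨p, hp, rfl⟩; exact ⟨p.1, hp.1, p.2, hp.2, rfl⟩
  unfold radius2 radiusS
  simp only [hset]

lemma innS_bddBelow (ν : X → Y → ℝ → ℝ) (hν : IsMG2PN X Y ν) (S : Set (X × Y)) (t : ℝ) :
    BddBelow {v : ℝ | ∃ p ∈ S, v = ν p.1 p.2 t} :=
  ⟨0, by rintro v ⟨p, _, rfl⟩; exact hν.nonneg _ _ _⟩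

lemma innS_le (ν : X → Y → ℝ → ℝ) (hν : IsMG2PN X Y ν) {S : Set (X × Y)} {p : X × Y}
    (hp : p ∈ S) (t : ℝ) : innS ν S t ≤ ν p.1 p.2 t :=
  csInf_le (innS_bddBelow ν hν S t) ⟨p, hp, rfl⟩

lemma le_innS (ν : X → Y → ℝ → ℝ) {S : Set (X × Y)} (hS : S.Nonempty) {c t : ℝ}
    (h : ∀ p ∈ S, c ≤ ν p.1 p.2 t) : c ≤ innS ν S t := by
  refine le_csInf ⟨ν hS.choose.1 hS.choose.2 t, hS.choose, hS.choose_spec, rfl⟩ ?_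
  rintro v ⟨p, hp, rfl⟩; exact h p hp

lemma innS_mono (ν : X → Y → ℝ → ℝ) (hν : IsMG2PN X Y ν) {S : Set (X × Y)}
    (hS : S.Nonempty) : Monotone (innS ν S) := by
  intro t t' htt'
  apply le_innS ν hS
  intro p hp
  exact (innS_le ν hν hp t).trans (hν.mono _ _ htt')

lemma innS_le_one (ν : X → Y → ℝ → ℝ) (hν : IsMG2PN X Y ν) {S : Set (X × Y)}
    (hS : S.Nonempty) (t : ℝ) : innS ν S t ≤ 1 :=
  (innS_le ν hν hS.choose_spec t).trans (hν.le_one _ _ _)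

lemma radiusS_le_one (ν : X → Y → ℝ → ℝ) (hν : IsMG2PN X Y ν) {S : Set (X × Y)}
    (hS : S.Nonempty) (t : ℝ) : radiusS ν S t ≤ 1 := by
  rw [radiusS_eq]
  exact ((innS_mono ν hν hS).leftLim_le le_rfl).trans (innS_le_one ν hν hS t)

theorem dBounded_minkowski_sum (ν : X → Y → ℝ → ℝ) (hν : IsMG2PN X Y ν)
    (A C : Set X) (B D : Set Y)
    (hA : A.Nonempty) (hB : B.Nonempty) (hC : C.Nonempty) (hD : D.Nonempty)
    (hABD : DBounded2 ν A (B + D)) (hCBD : DBounded2 ν C (B + D))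
    (hM : ∀ F G : ℝ → ℝ, IsDF F → IsDF G → IsDF (fun t => min (F t) (G t))) :
    Tendsto (radiusS ν ((A ×ˢ B) + (C ×ˢ D))) atTop (nhds 1) ∧
      ∀ t : ℝ, min (radius2 ν A (B + D) t) (radius2 ν C (B + D) t) ≤
        radiusS ν ((A ×ˢ B) + (C ×ˢ D)) t := by
  set S : Set (X × Y) := (A ×ˢ B) + (C ×ˢ D) with hSdef
  have hSne : S.Nonempty := (hA.prod hB).add (hC.prod hD)
  have hSAne : (A ×ˢ (B + D)).Nonempty := hA.prod (hB.add hD)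
  have hSCne : (C ×ˢ (B + D)).Nonempty := hC.prod (hB.add hD)
  -- pointwise inequality on the inner functions
  have key : ∀ t, min (innS ν (A ×ˢ (B + D)) t) (innS ν (C ×ˢ (B + D)) t) ≤ innS ν S t := by
    intro t
    apply le_innS ν hSne
    rintro p hp
    rcases Set.mem_add.1 hp with ⟨x, hx, y, hy, hxy⟩
    have hp1 : p.1 = x.1 + y.1 := by rw [← hxy]; rfl
    have hp2 : p.2 = x.2 + y.2 := by rw [← hxy]; rfl
    have hmemBD : p.2 ∈ B + D := by rw [hp2]; exact Set.add_mem_add hx.2 hy.2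
    have h1 : innS ν (A ×ˢ (B + D)) t ≤ ν x.1 p.2 t :=
      innS_le ν hν (show ((x.1, p.2) : X × Y) ∈ A ×ˢ (B + D) from ⟨hx.1, hmemBD⟩) t
    have h2 : innS ν (C ×ˢ (B + D)) t ≤ ν y.1 p.2 t :=
      innS_le ν hν (show ((y.1, p.2) : X × Y) ∈ C ×ˢ (B + D) from ⟨hy.1, hmemBD⟩) t
    calc min (innS ν (A ×ˢ (B + D)) t) (innS ν (C ×ˢ (B + D)) t)
        ≤ min (ν x.1 p.2 t) (ν y.1 p.2 t) := min_le_min h1 h2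
      _ ≤ ν (x.1 + y.1) p.2 t := hν.add_left _ _ _ _
      _ = ν p.1 p.2 t := by rw [hp1]
  -- radius inequality
  have hrad : ∀ t : ℝ, min (radius2 ν A (B + D) t) (radius2 ν C (B + D) t) ≤ radiusS ν S t := by
    intro t
    rw [radius2_eq, radius2_eq, radiusS_eq, radiusS_eq, radiusS_eq]
    have hA' := (innS_mono ν hν hSAne).tendsto_leftLim t
    have hC' := (innS_mono ν hν hSCne).tendsto_leftLim t
    have hS' := (innS_mono ν hν hSne).tendsto_leftLim t
    exact le_of_tendsto_of_tendsto' (hA'.min hC') hS' key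
  refine ⟨?_, hrad⟩
  have hmin : Tendsto (fun t => min (radius2 ν A (B + D) t) (radius2 ν C (B + D) t))
      atTop (nhds 1) := by
    have := hABD.min hCBD
    simpa using this
  exact tendsto_of_tendsto_of_tendsto_of_le_of_le hmin tendsto_const_nhds hrad
    (fun t => radiusS_le_one ν hν hSne t)
end
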